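/- For any n ≥ 2, the system x₁³ + x₁² − x₂², x₂³ + x₂² − x₃, …, x_{n−1}³ + x_{n−1}² − xₙ, xₙ² in n variables has the origin as an isolated root of multiplicity 2ⁿ, with primal basis for the local quotient ring given by the monomials {x₁^a x₂^b : 0 ≤ a < 2^{n−1}, 0 ≤ b < 2}, and the corank of the Jacobian at the origin equals 2 (breadth two). -/

import Mathlib

open MvPolynomial

noncomputable section

/-- Iterated partial derivative operator `∂^β` on polynomials. -/
def pdiff {n : ℕ} {K : Type} [CommSemiring K] (β : Fin n →₀ ℕ) :
    Module.End K (MvPolynomial (Fin n) K) :=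
  (List.ofFn fun i : Fin n =>
    ((MvPolynomial.pderiv i : Derivation K _ _).toLinearMap ^ (β i))).prod

/-- Action of a polynomial differential operator at the point ξ:
`Λ = Σ_β c_β ∂^β ↦ (p ↦ Σ_β c_β (∂^β p)(ξ))`. -/
def dapply {n : ℕ} (ξ : Fin n → ℂ) (Λ : (Fin n →₀ ℕ) →₀ ℂ)
    (p : MvPolynomial (Fin n) ℂ) : ℂ :=
  Λ.sum fun β c => c * eval ξ (pdiff β p)

def dapplyL {n : ℕ} (ξ : Fin n → ℂ) (p : MvPolynomial (Fin n) ℂ) :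
    ((Fin n →₀ ℕ) →₀ ℂ) →ₗ[ℂ] ℂ where
  toFun Λ := dapply ξ Λ p
  map_add' a b := Finsupp.sum_add_index' (fun β => zero_mul _)
    (fun β c d => add_mul c d _)
  map_smul' c a := by
    classical
    simp only [RingHom.id_apply, smul_eq_mul, dapply]
    rw [Finsupp.sum_smul_index fun β => zero_mul ((eval ξ) ((pdiff β) p)), Finsupp.mul_sum]
    exact Finsupp.sum_congr fun β _ => mul_assoc _ _ _

/-- The space `I^⊥ ∩ ℂ[∂_ξ]` of polynomial differential operators at ξ
annihilating the ideal `I`. -/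
def dualSpace {n : ℕ} (I : Ideal (MvPolynomial (Fin n) ℂ)) (ξ : Fin n → ℂ) :
    Submodule ℂ ((Fin n →₀ ℕ) →₀ ℂ) :=
  ⨅ p ∈ I, LinearMap.ker (dapplyL ξ p)

lemma mem_dualSpace {n : ℕ} {I : Ideal (MvPolynomial (Fin n) ℂ)} {ξ : Fin n → ℂ}
    {Λ : (Fin n →₀ ℕ) →₀ ℂ} : Λ ∈ dualSpace I ξ ↔ ∀ p ∈ I, dapply ξ Λ p = 0 := by
  simp only [dualSpace, Submodule.mem_iInf, LinearMap.mem_ker]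
  rfl

/-- The multiplicity of ξ as a root of I. -/
def mult {n : ℕ} (I : Ideal (MvPolynomial (Fin n) ℂ)) (ξ : Fin n → ℂ) : ℕ :=
  Module.finrank ℂ (dualSpace I ξ)

/-- Order (total degree in the ∂ variables) of a polynomial differential operator. -/
def ordD {n : ℕ} (Λ : (Fin n →₀ ℕ) →₀ ℂ) : ℕ :=
  Λ.support.sup fun β => β.sum fun _ k => k

/-- The nil-index of I at ξ: maximal order of elements of the dual space. -/
def nilIndex {n : ℕ} (I : Ideal (MvPolynomial (Fin n) ℂ)) (ξ : Fin n → ℂ) : ℕ :=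
  sSup {t | ∃ Λ ∈ dualSpace I ξ, Λ ≠ 0 ∧ ordD Λ = t}

/-- The maximal ideal at ξ. -/
def maxIdeal {n : ℕ} (ξ : Fin n → ℂ) : Ideal (MvPolynomial (Fin n) ℂ) :=
  Ideal.span (Set.range fun i => X i - C (ξ i))

/-- `(x-ξ)^α`. -/
def xpow {n : ℕ} (ξ : Fin n → ℂ) (α : Fin n →₀ ℕ) : MvPolynomial (Fin n) ℂ :=
  ∏ i : Fin n, (X i - C (ξ i)) ^ (α i)

/-- multi-index factorial -/
def mfact {n : ℕ} (β : Fin n →₀ ℕ) : ℕ := ∏ i : Fin n, Nat.factorial (β i)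

namespace Br2

open Finsupp

variable {n : ℕ}

/-- single partial derivative as an endomorphism -/
noncomputable abbrev pd (i : Fin n) : Module.End ℂ (MvPolynomial (Fin n) ℂ) :=
  ((MvPolynomial.pderiv i : Derivation ℂ _ _).toLinearMap)

lemma pd_apply (i : Fin n) (p : MvPolynomial (Fin n) ℂ) : pd i p = pderiv i p := rfl

lemma pd_pow_monomial (i : Fin n) (k : ℕ) (α : Fin n →₀ ℕ) (c : ℂ) :
    (pd i ^ k) (monomial α c) =
      monomial (α - Finsupp.single i k) (c * ((α i).descFactorial k : ℕ)) := by
  induction k with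
  | zero => simp
  | succ k ih =>
    rw [pow_succ', Module.End.mul_apply, ih, pd_apply, pderiv_monomial]
    have h1 : α - Finsupp.single i k - Finsupp.single i 1
        = α - Finsupp.single i (k + 1) := by
      rw [tsub_tsub, ← Finsupp.single_add]
    have h2 : (α - Finsupp.single i k) i = α i - k := by
      rw [Finsupp.tsub_apply, Finsupp.single_eq_same]
    rw [h1, h2]
    congr 1
    rw [mul_assoc, ← Nat.cast_mul, mul_comm ((α i).descFactorial k), ← Nat.descFactorial_succ]

/-- count as a finsupp -/
noncomputable def cnt (l : List (Fin n)) : Fin n →₀ ℕ :=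
  Finsupp.equivFunOnFinite.symm (fun i => l.count i)

lemma cnt_apply (l : List (Fin n)) (j : Fin n) : cnt l j = l.count j := by
  simp [cnt]

lemma cnt_nil : cnt ([] : List (Fin n)) = 0 := by
  ext j; simp [cnt_apply]

lemma cnt_cons (j : Fin n) (l : List (Fin n)) :
    cnt (j :: l) = cnt l + Finsupp.single j 1 := by
  ext i
  by_cases h : i = j
  · subst h; simp [cnt_apply, List.count_cons]
  · simp [cnt_apply, List.count_cons, h, Finsupp.single_apply, Ne.symm h]

lemma listprod_map_pd (l : List (Fin n)) (α : Fin n →₀ ℕ) (c : ℂ) :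
    (l.map pd).prod (monomial α c) =
      monomial (α - cnt l)
        (c * ((∏ i : Fin n, (α i).descFactorial (l.count i) : ℕ) : ℂ)) := by
  induction l with
  | nil => simp [cnt_nil]
  | cons j l ih =>
    rw [List.map_cons, List.prod_cons, Module.End.mul_apply, ih, pd_apply, pderiv_monomial]
    have h1 : α - cnt l - Finsupp.single j 1 = α - cnt (j :: l) := by
      rw [tsub_tsub, cnt_cons]
    have h2 : (α - cnt l) j = α j - l.count j := by
      rw [Finsupp.tsub_apply, cnt_apply]
    have h3 : (∏ i : Fin n, (α i).descFactorial ((j :: l).count i))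
        = (α j - l.count j) * ∏ i : Fin n, (α i).descFactorial (l.count i) := by
      rw [← Finset.mul_prod_erase Finset.univ _ (Finset.mem_univ j),
          ← Finset.mul_prod_erase Finset.univ
            (fun i => (α i).descFactorial (l.count i)) (Finset.mem_univ j)]
      have h4 : ∀ i ∈ Finset.univ.erase j,
          (α i).descFactorial ((j :: l).count i)
            = (α i).descFactorial (l.count i) := by
        intro i hi
        rw [List.count_cons_of_ne (Finset.ne_of_mem_erase hi).symm]
      rw [Finset.prod_congr rfl h4, List.count_cons_self, Nat.descFactorial_succ]
      ring
    rw [h1, h2, h3]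
    congr 1
    push_cast
    ring

lemma pdiff_eq_listprod (β : Fin n →₀ ℕ) :
    (pdiff β : Module.End ℂ (MvPolynomial (Fin n) ℂ)) =
      ((List.ofFn fun i : Fin n => List.replicate (β i) i).flatten.map pd).prod := by
  rw [pdiff, List.map_flatten, List.map_ofFn, List.prod_flatten, List.map_ofFn]
  refine congrArg List.prod (congrArg List.ofFn (funext fun i => ?_))
  show _ = (List.map pd (List.replicate (β i) i)).prod
  rw [List.map_replicate, List.prod_replicate]

lemma count_repl (β : Fin n →₀ ℕ) (j : Fin n) :
    (List.ofFn fun i : Fin n => List.replicate (β i) i).flatten.count j = β j := by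
  rw [List.count_flatten, List.map_ofFn, List.sum_ofFn]
  simp only [Function.comp, List.count_replicate, beq_iff_eq]
  simp

lemma cnt_repl (β : Fin n →₀ ℕ) :
    cnt (List.ofFn fun i : Fin n => List.replicate (β i) i).flatten = β := by
  ext j; rw [cnt_apply, count_repl]

lemma pdiff_monomial (β α : Fin n →₀ ℕ) (c : ℂ) :
    pdiff β (monomial α c) =
      monomial (α - β) (c * ((∏ i : Fin n, (α i).descFactorial (β i) : ℕ) : ℂ)) := by
  rw [pdiff_eq_listprod, listprod_map_pd, cnt_repl]
  simp only [count_repl]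

lemma eval0_monomial (α : Fin n →₀ ℕ) (c : ℂ) :
    eval (0 : Fin n → ℂ) (monomial α c) = if α = 0 then c else 0 := by
  rw [eval_zero]
  exact constantCoeff_monomial _ _

lemma eval0_pdiff (β : Fin n →₀ ℕ) (p : MvPolynomial (Fin n) ℂ) :
    eval (0 : Fin n → ℂ) (pdiff β p) = (mfact β : ℂ) * coeff β p := by
  induction p using MvPolynomial.induction_on' with
  | add p q hp hq => simp only [map_add, coeff_add, hp, hq, mul_add]
  | monomial α c =>
    rw [pdiff_monomial, eval0_monomial, coeff_monomial]
    by_cases hab : α = β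
    · subst hab
      rw [if_pos rfl, tsub_self, if_pos rfl]
      have : ∀ i : Fin n, (α i).descFactorial (α i) = (α i).factorial :=
        fun i => Nat.descFactorial_self _
      rw [Finset.prod_congr rfl fun i _ => this i]
      rw [mfact, mul_comm]
    · rw [if_neg hab, mul_zero]
      by_cases hle : α - β = 0
      · rw [if_pos hle]
        have hle' : α ≤ β := tsub_eq_zero_iff_le.mp hle
        have : ∃ i, α i < β i := by
          by_contra hcon
          push_neg at hcon
          exact hab (Finsupp.ext fun i => le_antisymm (Finsupp.le_def.mp hle' i) (hcon i))
        obtain ⟨i, hi⟩ := this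
        rw [Finset.prod_eq_zero (Finset.mem_univ i)
          (Nat.descFactorial_eq_zero_iff_lt.mpr hi)]
        simp
      · rw [if_neg hle]

lemma dapply_zero_eq (Λ : (Fin n →₀ ℕ) →₀ ℂ) (p : MvPolynomial (Fin n) ℂ) :
    dapply (0 : Fin n → ℂ) Λ p = Λ.sum fun β c => c * ((mfact β : ℂ) * coeff β p) := by
  unfold dapply
  exact Finsupp.sum_congr fun β _ => by rw [eval0_pdiff]

end Br2
namespace Br2

variable {n : ℕ}

/-- total degree of a multi-index -/
def dsum (α : Fin n →₀ ℕ) : ℕ := α.sum fun _ k => k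

lemma dsum_add (α β : Fin n →₀ ℕ) : dsum (α + β) = dsum α + dsum β :=
  Finsupp.sum_add_index' (fun _ => rfl) (fun _ a b => rfl)

lemma dsum_apply_le (α : Fin n →₀ ℕ) (i : Fin n) : α i ≤ dsum α := by
  by_cases hi : α i = 0
  · simp [hi]
  · exact Finset.single_le_sum (f := fun j => α j) (fun _ _ => Nat.zero_le _)
      (Finsupp.mem_support_iff.mpr hi)

lemma dsum_eq_zero {α : Fin n →₀ ℕ} (h : dsum α = 0) : α = 0 := by
  ext i
  have h2 : α i ≤ dsum α := dsum_apply_le α i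
  simp only [Finsupp.coe_zero, Pi.zero_apply]
  omega

lemma ordD_le {Λ : (Fin n →₀ ℕ) →₀ ℂ} {β : Fin n →₀ ℕ} (h : β ∈ Λ.support) :
    dsum β ≤ ordD Λ :=
  Finset.le_sup (f := fun β => β.sum fun _ k => k) h

/-- `LowCoeff k p` : all monomials of `p` have total degree `≥ k` -/
def LowCoeff (k : ℕ) (p : MvPolynomial (Fin n) ℂ) : Prop :=
  ∀ α : Fin n →₀ ℕ, dsum α < k → coeff α p = 0

lemma lowCoeff_zero (p : MvPolynomial (Fin n) ℂ) : LowCoeff 0 p := fun _ h => absurd h (by omega)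

lemma lowCoeff_one {p : MvPolynomial (Fin n) ℂ} (h : constantCoeff p = 0) : LowCoeff 1 p := by
  intro α hα
  have : α = 0 := dsum_eq_zero (by omega)
  subst this
  exact h

lemma lowCoeff_mul {a b : ℕ} {p q : MvPolynomial (Fin n) ℂ}
    (hp : LowCoeff a p) (hq : LowCoeff b q) : LowCoeff (a + b) (p * q) := by
  intro α hα
  rw [MvPolynomial.coeff_mul]
  apply Finset.sum_eq_zero
  rintro ⟨β, γ⟩ hm
  rw [Finset.HasAntidiagonal.mem_antidiagonal] at hm
  have hsum : dsum β + dsum γ = dsum α := by rw [← dsum_add, hm]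
  by_cases hb : dsum β < a
  · rw [hp β hb, zero_mul]
  · rw [hq γ (by omega), mul_zero]

lemma lowCoeff_pow {p : MvPolynomial (Fin n) ℂ} (h : LowCoeff 1 p) (k : ℕ) :
    LowCoeff k (p ^ k) := by
  induction k with
  | zero => exact lowCoeff_zero _
  | succ k ih =>
    rw [pow_succ]
    exact lowCoeff_mul ih h

lemma dapply_eq_zero_of_lowCoeff {Λ : (Fin n →₀ ℕ) →₀ ℂ} {p : MvPolynomial (Fin n) ℂ}
    (h : LowCoeff (ordD Λ + 1) p) : dapply (0 : Fin n → ℂ) Λ p = 0 := by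
  rw [dapply_zero_eq]
  apply Finset.sum_eq_zero
  intro β hβ
  dsimp only
  rw [h β (by have := ordD_le hβ; omega), mul_zero, mul_zero]

/-- `dapply` at a point, as a linear map in the polynomial -/
noncomputable def dapplyP (ξ : Fin n → ℂ) (Λ : (Fin n →₀ ℕ) →₀ ℂ) :
    MvPolynomial (Fin n) ℂ →ₗ[ℂ] ℂ where
  toFun p := dapply ξ Λ p
  map_add' p q := by
    unfold dapply
    rw [← Finsupp.sum_add]
    exact Finsupp.sum_congr fun β c => by rw [map_add, map_add, mul_add]
  map_smul' c p := by
    unfold dapply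
    simp only [RingHom.id_apply, smul_eq_mul]
    rw [Finsupp.mul_sum]
    refine Finsupp.sum_congr fun β d => ?_
    rw [map_smul, smul_eq_C_mul, map_mul, eval_C]
    ring

lemma dapplyP_apply (ξ : Fin n → ℂ) (Λ : (Fin n →₀ ℕ) →₀ ℂ) (p : MvPolynomial (Fin n) ℂ) :
    dapplyP ξ Λ p = dapply ξ Λ p := rfl

end Br2
namespace Br2

set_option maxHeartbeats 1000000
set_option synthInstance.maxHeartbeats 1000000

variable {n : ℕ}

lemma pos_of_two_le (hn : 2 ≤ n) : 0 < n := by omega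

lemma one_lt_of_two_le (hn : 2 ≤ n) : 1 < n := by omega

lemma succ_lt_of_ne_last (i : Fin n) (h : ¬ (i : ℕ) = n - 1) : (i : ℕ) + 1 < n := by
  have := i.isLt; omega

noncomputable def bgen (hn : 2 ≤ n) : Fin n → MvPolynomial (Fin n) ℂ := fun i =>
  if h0 : (i : ℕ) = 0 then
    X (⟨0, pos_of_two_le hn⟩ : Fin n) ^ 3 + X (⟨0, pos_of_two_le hn⟩ : Fin n) ^ 2
      - X (⟨1, one_lt_of_two_le hn⟩ : Fin n) ^ 2
  else if hl : (i : ℕ) = n - 1 then X i ^ 2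
  else X i ^ 3 + X i ^ 2
    - X (⟨(i : ℕ) + 1, succ_lt_of_ne_last i hl⟩ : Fin n)

variable (hn : 2 ≤ n)

noncomputable def Iid : Ideal (MvPolynomial (Fin n) ℂ) := Ideal.span (Set.range (bgen hn))

noncomputable def XP : MvPolynomial (Fin n) ℂ :=
  X (⟨0, pos_of_two_le hn⟩ : Fin n) ^ (2 ^ (n - 1))

noncomputable def Qp : Ideal (MvPolynomial (Fin n) ℂ) := Iid hn ⊔ Ideal.span {XP hn}

lemma bgen_at_zero {i : Fin n} (h : (i : ℕ) = 0) :
    bgen hn i = X (⟨0, pos_of_two_le hn⟩ : Fin n) ^ 3 + X (⟨0, pos_of_two_le hn⟩ : Fin n) ^ 2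
      - X (⟨1, one_lt_of_two_le hn⟩ : Fin n) ^ 2 := by
  rw [bgen, dif_pos h]

lemma bgen_at_mid {i : Fin n} (h1 : (i : ℕ) ≠ 0) (h2 : (i : ℕ) ≠ n - 1) :
    bgen hn i = X i ^ 3 + X i ^ 2
      - X (⟨(i : ℕ) + 1, succ_lt_of_ne_last i h2⟩ : Fin n) := by
  rw [bgen, dif_neg h1, dif_neg h2]

lemma bgen_at_last {i : Fin n} (h : (i : ℕ) = n - 1) : bgen hn i = X i ^ 2 := by
  rw [bgen, dif_neg (by omega), dif_pos h]

lemma bgen_mem (m : Fin n) : bgen hn m ∈ Iid hn := Ideal.subset_span ⟨m, rfl⟩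

lemma rel0_mem :
    (X (⟨0, pos_of_two_le hn⟩ : Fin n) ^ 3 + X (⟨0, pos_of_two_le hn⟩ : Fin n) ^ 2
      - X (⟨1, one_lt_of_two_le hn⟩ : Fin n) ^ 2) ∈ Iid hn := by
  have h := bgen_mem hn ⟨0, pos_of_two_le hn⟩
  rwa [bgen_at_zero hn rfl] at h

lemma relmid_mem (k j : ℕ) (h1 : 1 ≤ k) (h2 : k < n - 1) (hj : j = k + 1)
    (hkn : k < n) (hjn : j < n) :
    (X (⟨k, hkn⟩ : Fin n) ^ 3 + X (⟨k, hkn⟩ : Fin n) ^ 2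
      - X (⟨j, hjn⟩ : Fin n)) ∈ Iid hn := by
  subst hj
  have h := bgen_mem hn ⟨k, hkn⟩
  rwa [bgen_at_mid hn (by simpa using by omega) (by simpa using by omega)] at h

lemma rellast_mem (k : ℕ) (hk : k = n - 1) (hkn : k < n) :
    (X (⟨k, hkn⟩ : Fin n) ^ 2) ∈ Iid hn := by
  have h := bgen_mem hn ⟨k, hkn⟩
  rwa [bgen_at_last hn (by simpa using hk)] at h

lemma xsq_cong (k : ℕ) (h1 : 1 ≤ k) : ∀ (hk : k < n),
    ∃ u : MvPolynomial (Fin n) ℂ, constantCoeff u = 1 ∧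
      X (⟨k, hk⟩ : Fin n) ^ 2 - u * X (⟨0, pos_of_two_le hn⟩ : Fin n) ^ (2 ^ k) ∈ Iid hn := by
  induction k, h1 using Nat.le_induction with
  | base =>
    intro hk
    refine ⟨1 + X (⟨0, pos_of_two_le hn⟩ : Fin n), by simp, ?_⟩
    have key : X (⟨1, hk⟩ : Fin n) ^ 2
        - ((1 : MvPolynomial (Fin n) ℂ) + X (⟨0, pos_of_two_le hn⟩ : Fin n))
            * X (⟨0, pos_of_two_le hn⟩ : Fin n) ^ (2 ^ 1)
        = -(X (⟨0, pos_of_two_le hn⟩ : Fin n) ^ 3 + X (⟨0, pos_of_two_le hn⟩ : Fin n) ^ 2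
          - X (⟨1, one_lt_of_two_le hn⟩ : Fin n) ^ 2) := by
      have h21 : (2:ℕ) ^ 1 = 2 := by norm_num
      rw [h21]
      ring
    rw [key]
    exact neg_mem (rel0_mem hn)
  | succ k hk1 ih =>
    intro hk
    obtain ⟨u, hu1, hu2⟩ := ih (by omega)
    refine ⟨u ^ 2 * (1 + X (⟨k, by omega⟩ : Fin n)) ^ 2, by simp [hu1], ?_⟩
    have key : X (⟨k + 1, hk⟩ : Fin n) ^ 2
        - (u ^ 2 * (1 + X (⟨k, by omega⟩ : Fin n)) ^ 2) * X (⟨0, pos_of_two_le hn⟩ : Fin n) ^ (2 ^ (k + 1))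
        = (X (⟨k + 1, hk⟩ : Fin n) + X (⟨k, by omega⟩ : Fin n) ^ 2 + X (⟨k, by omega⟩ : Fin n) ^ 3)
            * -(X (⟨k, by omega⟩ : Fin n) ^ 3 + X (⟨k, by omega⟩ : Fin n) ^ 2 - X (⟨k + 1, hk⟩ : Fin n))
          + ((1 + X (⟨k, by omega⟩ : Fin n)) ^ 2
              * (X (⟨k, by omega⟩ : Fin n) ^ 2 + u * X (⟨0, pos_of_two_le hn⟩ : Fin n) ^ (2 ^ k)))
            * (X (⟨k, by omega⟩ : Fin n) ^ 2 - u * X (⟨0, pos_of_two_le hn⟩ : Fin n) ^ (2 ^ k)) := by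
      rw [pow_succ 2 k, pow_mul]
      ring
    rw [key]
    exact add_mem
      (Ideal.mul_mem_left _ _ (neg_mem (relmid_mem hn k (k+1) hk1 (by omega) rfl (by omega) hk)))
      (Ideal.mul_mem_left _ _ hu2)

lemma exists_u : ∃ u : MvPolynomial (Fin n) ℂ, constantCoeff u = 1 ∧ u * XP hn ∈ Iid hn := by
  obtain ⟨u, hu1, hu2⟩ := xsq_cong hn (n - 1) (by omega) (by omega)
  refine ⟨u, hu1, ?_⟩
  have key : u * XP hn = X (⟨n - 1, by omega⟩ : Fin n) ^ 2
      - (X (⟨n - 1, by omega⟩ : Fin n) ^ 2 - u * X (⟨0, pos_of_two_le hn⟩ : Fin n) ^ (2 ^ (n - 1))) := by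
    rw [XP]; ring
  rw [key]
  exact sub_mem (rellast_mem hn (n - 1) rfl (by omega)) hu2

lemma Iid_le_Qp : Iid hn ≤ Qp hn := le_sup_left

lemma XP_mem_Qp : XP hn ∈ Qp hn :=
  Submodule.mem_sup_right (Ideal.subset_span (Set.mem_singleton _))

lemma nil_X0 : IsNilpotent (Ideal.Quotient.mk (Qp hn) (X (⟨0, pos_of_two_le hn⟩ : Fin n))) :=
  ⟨2 ^ (n - 1), by rw [← map_pow]; exact Ideal.Quotient.eq_zero_iff_mem.mpr (XP_mem_Qp hn)⟩

lemma nil_sq_cube {A : Type*} [CommRing A] {a : A} (h : IsNilpotent a) :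
    IsNilpotent (a ^ 2 + a ^ 3) := by
  have key : a ^ 2 + a ^ 3 = a * (a * (1 + a)) := by ring
  rw [key]
  exact Commute.isNilpotent_mul_right (Commute.all _ _) h

lemma nil_of_sq {A : Type*} [CommRing A] {a : A} (h : IsNilpotent (a ^ 2)) :
    IsNilpotent a := by
  obtain ⟨m, hm⟩ := h
  exact ⟨2 * m, by rw [pow_mul, hm]⟩

lemma nil_X : ∀ (k : ℕ) (hk : k < n),
    IsNilpotent (Ideal.Quotient.mk (Qp hn) (X (⟨k, hk⟩ : Fin n))) := by
  intro k
  induction k using Nat.strong_induction_on with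
  | _ k ih =>
    intro hk
    rcases Nat.eq_zero_or_pos k with h0 | hpos
    · subst h0; exact nil_X0 hn
    rcases Nat.lt_or_ge k 2 with h1 | h2
    · -- k = 1
      have hk1 : k = 1 := by omega
      subst hk1
      have hrel : Ideal.Quotient.mk (Qp hn)
          (X (⟨0, pos_of_two_le hn⟩ : Fin n) ^ 3 + X (⟨0, pos_of_two_le hn⟩ : Fin n) ^ 2
            - X (⟨1, one_lt_of_two_le hn⟩ : Fin n) ^ 2) = 0 :=
        Ideal.Quotient.eq_zero_iff_mem.mpr (Iid_le_Qp hn (rel0_mem hn))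
      have hsq : (Ideal.Quotient.mk (Qp hn) (X (⟨1, hk⟩ : Fin n))) ^ 2
          = (Ideal.Quotient.mk (Qp hn) (X (⟨0, pos_of_two_le hn⟩ : Fin n))) ^ 2
            + (Ideal.Quotient.mk (Qp hn) (X (⟨0, pos_of_two_le hn⟩ : Fin n))) ^ 3 := by
        rw [map_sub, map_add, sub_eq_zero] at hrel
        rw [← map_pow]
        rw [← hrel]
        rw [map_pow, map_pow]
        ring
      apply nil_of_sq
      rw [hsq]
      exact nil_sq_cube (nil_X0 hn)
    · -- k ≥ 2
      have hrel : Ideal.Quotient.mk (Qp hn)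
          (X (⟨k - 1, by omega⟩ : Fin n) ^ 3 + X (⟨k - 1, by omega⟩ : Fin n) ^ 2
            - X (⟨k, hk⟩ : Fin n)) = 0 :=
        Ideal.Quotient.eq_zero_iff_mem.mpr (Iid_le_Qp hn
          (relmid_mem hn (k - 1) k (by omega) (by omega) (by omega) (by omega) hk))
      have heq : Ideal.Quotient.mk (Qp hn) (X (⟨k, hk⟩ : Fin n))
          = (Ideal.Quotient.mk (Qp hn) (X (⟨k - 1, by omega⟩ : Fin n))) ^ 2
            + (Ideal.Quotient.mk (Qp hn) (X (⟨k - 1, by omega⟩ : Fin n))) ^ 3 := by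
        rw [map_sub, map_add, sub_eq_zero] at hrel
        rw [← hrel, map_pow, map_pow]
        ring
      rw [heq]
      exact nil_sq_cube (ih (k - 1) (by omega) (by omega))

lemma nil_X' (i : Fin n) : IsNilpotent (Ideal.Quotient.mk (Qp hn) (X i)) := by
  simpa using nil_X hn i.1 i.2

lemma nil_mk_of_cc0 {p : MvPolynomial (Fin n) ℂ} (hp : constantCoeff p = 0) :
    IsNilpotent (Ideal.Quotient.mk (Qp hn) p) := by
  have hps := p.as_sum
  suffices h : Ideal.Quotient.mk (Qp hn) p ∈ nilradical (MvPolynomial (Fin n) ℂ ⧸ Qp hn) by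
    exact mem_nilradical.mp h
  rw [hps, map_sum]
  apply sum_mem
  intro α hα
  have hα0 : α ≠ 0 := by
    rintro rfl
    rw [MvPolynomial.mem_support_iff] at hα
    rw [constantCoeff_eq] at hp
    exact hα hp
  obtain ⟨i, hi⟩ : ∃ i, α i ≠ 0 := by
    by_contra hcon
    push_neg at hcon
    exact hα0 (Finsupp.ext fun i => hcon i)
  have hle : Finsupp.single i 1 ≤ α := by
    rw [Finsupp.single_le_iff]; omega
  have hfac : monomial α (coeff α p)
      = X i * monomial (α - Finsupp.single i 1) (coeff α p) := by
    rw [X, monomial_mul, one_mul, add_tsub_cancel_of_le hle]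
  rw [hfac, map_mul, mem_nilradical]
  exact Commute.isNilpotent_mul_right (Commute.all _ _) (nil_X' hn i)

lemma isUnit_mk_of_cc {s : MvPolynomial (Fin n) ℂ} (hs : constantCoeff s ≠ 0) :
    IsUnit (Ideal.Quotient.mk (Qp hn) s) := by
  set c := constantCoeff s with hc
  have h1 : IsUnit (Ideal.Quotient.mk (Qp hn) (C c)) := by
    apply IsUnit.of_mul_eq_one (Ideal.Quotient.mk (Qp hn) (C c⁻¹))
    rw [← map_mul, ← map_mul, mul_inv_cancel₀ hs, map_one, map_one]
  have h2 : IsNilpotent (Ideal.Quotient.mk (Qp hn) (s - C c)) :=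
    nil_mk_of_cc0 hn (by simp [constantCoeff_C, hc])
  have h3 : Ideal.Quotient.mk (Qp hn) s
      = Ideal.Quotient.mk (Qp hn) (C c) + Ideal.Quotient.mk (Qp hn) (s - C c) := by
    rw [← map_add]; congr 1; ring
  rw [h3]
  exact h2.isUnit_add_left_of_commute h1 (Commute.all _ _)

lemma Qp_eq : Qp hn
    = Ideal.span {p | ∃ s, eval (fun _ => (0:ℂ) : Fin n → ℂ) s ≠ 0 ∧ s * p ∈ Iid hn} := by
  apply le_antisymm
  · refine sup_le ?_ ?_
    · rw [Iid, Ideal.span_le]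
      rintro p ⟨m, rfl⟩
      exact Ideal.subset_span ⟨1, by simp, by rw [one_mul]; exact bgen_mem hn m⟩
    · obtain ⟨u, hu1, hu2⟩ := exists_u hn
      refine (Ideal.span_singleton_le_iff_mem _).mpr (Ideal.subset_span ⟨u, ?_, hu2⟩)
      rw [eval_zero', hu1]
      exact one_ne_zero
  · rw [Ideal.span_le]
    rintro p ⟨s, hs, hsp⟩
    rw [SetLike.mem_coe, ← Ideal.Quotient.eq_zero_iff_mem]
    have h1 : Ideal.Quotient.mk (Qp hn) s * Ideal.Quotient.mk (Qp hn) p = 0 := by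
      rw [← map_mul]
      exact Ideal.Quotient.eq_zero_iff_mem.mpr (Iid_le_Qp hn hsp)
    have h2 : IsUnit (Ideal.Quotient.mk (Qp hn) s) := by
      apply isUnit_mk_of_cc hn
      rwa [eval_zero'] at hs
    exact (IsUnit.mul_right_eq_zero h2).mp h1

lemma monomial_mem_pow_span (α : Fin n →₀ ℕ) (c : ℂ) :
    monomial α c ∈ (Ideal.span (Set.range (X : Fin n → MvPolynomial (Fin n) ℂ))) ^ (dsum α) := by
  induction α using Finsupp.induction with
  | zero => simp [dsum, Ideal.one_eq_top]
  | single_add i b f hif hb ih =>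
    have hst : dsum (Finsupp.single i b + f) = b + dsum f := by
      rw [dsum_add]
      congr 1
      simp [dsum, Finsupp.sum_single_index]
    rw [hst, pow_add]
    have hfac : monomial (Finsupp.single i b + f) c
        = X i ^ b * monomial f c := by
      rw [X_pow_eq_monomial, monomial_mul, one_mul]
    rw [hfac]
    exact Ideal.mul_mem_mul
      (Ideal.pow_mem_pow (Ideal.subset_span (Set.mem_range_self i)) b) ih

lemma exists_K : ∃ K : ℕ, ∀ α : Fin n →₀ ℕ, K ≤ dsum α →
    Ideal.Quotient.mk (Qp hn) (monomial α (1:ℂ)) = 0 := by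
  set M : Ideal (MvPolynomial (Fin n) ℂ) := Ideal.span (Set.range X) with hM
  set J := M.map (Ideal.Quotient.mk (Qp hn)) with hJ
  have hmapspan : J = Ideal.span ((Ideal.Quotient.mk (Qp hn)) '' Set.range X) := by
    rw [hJ, hM, Ideal.map_span]
  have hfg : J.FG := by
    rw [hmapspan]
    exact Submodule.fg_span ((Set.finite_range X).image _)
  have hrad : J ≤ (0 : Ideal (MvPolynomial (Fin n) ℂ ⧸ Qp hn)).radical := by
    rw [hmapspan, Ideal.span_le]
    rintro y ⟨x, ⟨i, rfl⟩, rfl⟩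
    exact mem_nilradical.mpr (nil_X' hn i)
  obtain ⟨K, hK⟩ := Ideal.exists_pow_le_of_le_radical_of_fg hrad hfg
  refine ⟨K, fun α hα => ?_⟩
  have h1 : monomial α (1:ℂ) ∈ M ^ dsum α := monomial_mem_pow_span α 1
  have h2 : Ideal.Quotient.mk (Qp hn) (monomial α (1:ℂ)) ∈ J ^ dsum α := by
    rw [hJ, ← Ideal.map_pow]
    exact Ideal.mem_map_of_mem _ h1
  have h3 : (J : Ideal _) ^ dsum α ≤ J ^ K := Ideal.pow_le_pow_right hα
  simpa using hK (h3 h2)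

end Br2
namespace Br2

set_option maxHeartbeats 1000000
set_option synthInstance.maxHeartbeats 1000000

open Polynomial in
noncomputable abbrev Tring (N : ℕ) := AdjoinRoot ((Polynomial.X : Polynomial ℂ) ^ N)

noncomputable abbrev tT (N : ℕ) : Tring N := AdjoinRoot.root _

open Polynomial in
noncomputable abbrev qpoly (N : ℕ) : Polynomial (Tring N) :=
  Polynomial.X ^ 2 - Polynomial.C ((tT N) ^ 2 + (tT N) ^ 3)

noncomputable abbrev Sring (N : ℕ) := AdjoinRoot (qpoly N)

noncomputable abbrev rS (N : ℕ) : Sring N := AdjoinRoot.root _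
noncomputable abbrev tS (N : ℕ) : Sring N := algebraMap (Tring N) (Sring N) (tT N)

lemma qpoly_monic (N : ℕ) : (qpoly N).Monic := by
  apply Polynomial.monic_X_pow_sub
  calc Polynomial.degree (Polynomial.C ((tT N) ^ 2 + (tT N) ^ 3)) ≤ 0 :=
        Polynomial.degree_C_le
    _ < 2 := by norm_num

lemma tT_pow (N : ℕ) : tT N ^ N = 0 := by
  have h : tT N ^ N = AdjoinRoot.mk ((Polynomial.X : Polynomial ℂ) ^ N)
      ((Polynomial.X : Polynomial ℂ) ^ N) := by
    rw [map_pow, AdjoinRoot.mk_X]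
  rw [h, AdjoinRoot.mk_self]

lemma tS_pow (N : ℕ) : tS N ^ N = 0 := by
  rw [← map_pow, tT_pow, map_zero]

lemma rS_sq (N : ℕ) : rS N ^ 2 = tS N ^ 2 + tS N ^ 3 := by
  have h : (AdjoinRoot.mk (qpoly N)) (qpoly N) = 0 := AdjoinRoot.mk_self
  rw [qpoly, map_sub, sub_eq_zero, map_pow, AdjoinRoot.mk_X] at h
  rw [h, AdjoinRoot.mk_C, ← AdjoinRoot.algebraMap_eq, map_add, map_pow, map_pow]

noncomputable def wseq (N : ℕ) : ℕ → Sring N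
  | 0 => tS N
  | 1 => rS N
  | (k + 2) => wseq N (k + 1) ^ 2 + wseq N (k + 1) ^ 3

lemma wseq_zero (N : ℕ) : wseq N 0 = tS N := rfl
lemma wseq_one (N : ℕ) : wseq N 1 = rS N := rfl

lemma wseq_succ (N k : ℕ) (hk : 1 ≤ k) :
    wseq N (k + 1) = wseq N k ^ 2 + wseq N k ^ 3 := by
  obtain ⟨j, rfl⟩ : ∃ j, k = j + 1 := ⟨k - 1, by omega⟩
  rfl

lemma wseq_sq (N : ℕ) (k : ℕ) (hk : 1 ≤ k) :
    ∃ v : Sring N, wseq N k ^ 2 = tS N ^ (2 ^ k) * v := by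
  induction k, hk using Nat.le_induction with
  | base =>
    refine ⟨1 + tS N, ?_⟩
    have h21 : (2:ℕ) ^ 1 = 2 := by norm_num
    rw [h21]
    show rS N ^ 2 = _
    rw [rS_sq]
    ring
  | succ k hk1 ih =>
    obtain ⟨v, hv⟩ := ih
    refine ⟨v ^ 2 * (1 + wseq N k) ^ 2, ?_⟩
    rw [wseq_succ N k hk1, pow_succ 2 k, pow_mul]
    have key : (wseq N k ^ 2 + wseq N k ^ 3) ^ 2
        = (wseq N k ^ 2) ^ 2 * (1 + wseq N k) ^ 2 := by ring
    rw [key, hv]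
    ring

section Phi

variable {n : ℕ} (hn : 2 ≤ n)

noncomputable def wvec : Fin n → Sring (2 ^ (n - 1)) := fun i => wseq (2 ^ (n - 1)) (i : ℕ)

noncomputable def phi : MvPolynomial (Fin n) ℂ →ₐ[ℂ] Sring (2 ^ (n - 1)) :=
  MvPolynomial.aeval (wvec (n := n))

lemma phi_X (i : Fin n) : phi (X i) = wseq (2 ^ (n - 1)) (i : ℕ) := by
  rw [phi, aeval_X, wvec]

lemma phi_bgen (m : Fin n) : phi (bgen hn m) = 0 := by
  by_cases h0 : (m : ℕ) = 0
  · rw [bgen_at_zero hn h0, map_sub, map_add, map_pow, map_pow, map_pow]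
    simp only [phi_X]
    show wseq _ 0 ^ 3 + wseq _ 0 ^ 2 - wseq _ 1 ^ 2 = 0
    rw [wseq_zero, wseq_one, rS_sq]
    ring
  · by_cases hl : (m : ℕ) = n - 1
    · rw [bgen_at_last hn hl, map_pow, phi_X, hl]
      obtain ⟨v, hv⟩ := wseq_sq (2 ^ (n - 1)) (n - 1) (by omega)
      rw [hv, tS_pow, zero_mul]
    · rw [bgen_at_mid hn h0 hl, map_sub, map_add, map_pow, map_pow]
      simp only [phi_X]
      show wseq _ (m : ℕ) ^ 3 + wseq _ (m : ℕ) ^ 2 - wseq _ ((m : ℕ) + 1) = 0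
      rw [wseq_succ _ _ (by omega)]
      ring

lemma phi_XP : phi (XP hn) = 0 := by
  rw [XP, map_pow, phi_X]
  show tS _ ^ (2 ^ (n - 1)) = 0
  exact tS_pow _

lemma phi_vanish : ∀ p ∈ Qp hn, phi (n := n) p = 0 := by
  intro p hp
  have hker : Qp hn ≤ RingHom.ker (phi (n := n)).toRingHom := by
    refine sup_le ?_ ?_
    · rw [Iid, Ideal.span_le]
      rintro p ⟨m, rfl⟩
      rw [SetLike.mem_coe, RingHom.mem_ker]
      exact phi_bgen hn m
    · rw [Ideal.span_singleton_le_iff_mem, RingHom.mem_ker]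
      exact phi_XP hn
  exact hker hp

noncomputable def psi : (MvPolynomial (Fin n) ℂ ⧸ Qp hn) →ₐ[ℂ] Sring (2 ^ (n - 1)) :=
  Ideal.Quotient.liftₐ (Qp hn) phi (phi_vanish hn)

lemma psi_mk (p : MvPolynomial (Fin n) ℂ) :
    psi hn (Ideal.Quotient.mk (Qp hn) p) = phi p := rfl

/-- the candidate basis family -/
noncomputable def fam : Fin (2 ^ (n - 1)) × Fin 2 → (MvPolynomial (Fin n) ℂ ⧸ Qp hn) :=
  fun p => Ideal.Quotient.mk (Qp hn)
    (X (⟨0, pos_of_two_le hn⟩ : Fin n) ^ (p.1 : ℕ) * X (⟨1, one_lt_of_two_le hn⟩ : Fin n) ^ (p.2 : ℕ))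

lemma fam_apply (p : Fin (2 ^ (n - 1)) × Fin 2) :
    fam hn p = Ideal.Quotient.mk (Qp hn)
      (X (⟨0, pos_of_two_le hn⟩ : Fin n) ^ (p.1 : ℕ) * X (⟨1, one_lt_of_two_le hn⟩ : Fin n) ^ (p.2 : ℕ)) := rfl

lemma psi_fam (p : Fin (2 ^ (n - 1)) × Fin 2) :
    psi hn (fam hn p) = tS (2 ^ (n - 1)) ^ (p.1 : ℕ) * rS (2 ^ (n - 1)) ^ (p.2 : ℕ) := by
  rw [fam, psi_mk, map_mul, map_pow, map_pow, phi_X, phi_X]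
  rfl

lemma fam_indep : LinearIndependent ℂ (fam hn) := by
  classical
  set N := 2 ^ (n - 1) with hN
  haveI : Nontrivial (Tring N) := by
    apply AdjoinRoot.nontrivial
    rw [Polynomial.degree_X_pow]
    simp only [ne_eq, Nat.cast_eq_zero]
    positivity
  have hmonX : ((Polynomial.X : Polynomial ℂ) ^ N).Monic := Polynomial.monic_X_pow _
  set pbT := AdjoinRoot.powerBasis' hmonX with hpbT
  set pbS := AdjoinRoot.powerBasis' (qpoly_monic N) with hpbS
  have hsm : LinearIndependent ℂ
      (fun p : Fin pbT.dim × Fin pbS.dim => pbT.basis p.1 • pbS.basis p.2) :=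
    linearIndependent_smul pbT.basis.linearIndependent pbS.basis.linearIndependent
  have hdT : pbT.dim = N := by
    show ((Polynomial.X : Polynomial ℂ) ^ N).natDegree = N
    rw [Polynomial.natDegree_X_pow]
  have hdS : pbS.dim = 2 := by
    show (qpoly N).natDegree = 2
    rw [qpoly, Polynomial.natDegree_X_pow_sub_C]
  -- transport along the index equivalence
  let e : Fin N × Fin 2 → Fin pbT.dim × Fin pbS.dim :=
    fun p => (Fin.cast hdT.symm p.1, Fin.cast hdS.symm p.2)
  have he : Function.Injective e := by
    intro a b hab
    have h1 : (a.1 : ℕ) = (b.1 : ℕ) := congrArg (fun x => ((x.1 : Fin pbT.dim) : ℕ)) hab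
    have h2 : (a.2 : ℕ) = (b.2 : ℕ) := congrArg (fun x => ((x.2 : Fin pbS.dim) : ℕ)) hab
    exact Prod.ext (Fin.ext h1) (Fin.ext h2)
  have hcomp := hsm.comp e he
  apply LinearIndependent.of_comp (psi hn).toLinearMap
  have hfun : ((psi hn).toLinearMap ∘ fam hn)
      = (fun p : Fin pbT.dim × Fin pbS.dim => pbT.basis p.1 • pbS.basis p.2) ∘ e := by
    funext p
    simp only [Function.comp_apply, AlgHom.toLinearMap_apply]
    rw [psi_fam hn p]
    show _ = pbT.basis (Fin.cast hdT.symm p.1) • pbS.basis (Fin.cast hdS.symm p.2)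
    rw [pbT.basis_eq_pow, pbS.basis_eq_pow]
    have hgT : pbT.gen = tT N := rfl
    have hgS : pbS.gen = rS N := rfl
    rw [hgT, hgS]
    rw [Algebra.smul_def, map_pow]
    rfl
  rw [hfun]
  exact hcomp

/-- weighted measure for the rewriting induction -/
def meas (α : Fin n →₀ ℕ) : ℕ := ∑ i : Fin n, α i * 4 ^ (i : ℕ)

lemma meas_add (α β : Fin n →₀ ℕ) : meas (α + β) = meas α + meas β := by
  rw [meas, meas, meas, ← Finset.sum_add_distrib]
  exact Finset.sum_congr rfl fun i _ => by rw [Finsupp.add_apply, add_mul]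

lemma meas_single (i : Fin n) (k : ℕ) : meas (Finsupp.single i k) = k * 4 ^ (i : ℕ) := by
  rw [meas]
  rw [Finset.sum_eq_single i]
  · rw [Finsupp.single_eq_same]
  · intro j _ hj
    rw [Finsupp.single_apply, if_neg (by exact fun h => hj (by rw [h])), zero_mul]
  · intro h
    exact absurd (Finset.mem_univ i) h

end Phi

end Br2
namespace Br2

set_option maxHeartbeats 1000000
set_option synthInstance.maxHeartbeats 1000000

section Span

variable {n : ℕ} (hn : 2 ≤ n)

lemma mk_monomial_mem :
    ∀ α : Fin n →₀ ℕ, Ideal.Quotient.mk (Qp hn) (monomial α 1)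
      ∈ Submodule.span ℂ (Set.range (fam hn)) := by
  suffices H : ∀ m : ℕ, ∀ α : Fin n →₀ ℕ, meas α ≤ m →
      Ideal.Quotient.mk (Qp hn) (monomial α 1) ∈ Submodule.span ℂ (Set.range (fam hn)) by
    exact fun α => H (meas α) α le_rfl
  intro m
  induction m using Nat.strong_induction_on with
  | _ m IH =>
    intro α hα
    by_cases hhigh : ∃ j : Fin n, 2 ≤ (j : ℕ) ∧ α j ≠ 0
    · obtain ⟨⟨jv, hjlt⟩, hj2, hjne⟩ := hhigh
      simp only at hj2 hjne
      set α' := α - Finsupp.single (⟨jv, hjlt⟩ : Fin n) 1 with hα'def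
      have hle : Finsupp.single (⟨jv, hjlt⟩ : Fin n) 1 ≤ α := by
        rw [Finsupp.single_le_iff]; omega
      have hsplit : α = α' + Finsupp.single (⟨jv, hjlt⟩ : Fin n) 1 := by
        rw [hα'def, tsub_add_cancel_of_le hle]
      -- the rewriting relation
      have hrel : Ideal.Quotient.mk (Qp hn)
          (X (⟨jv - 1, by omega⟩ : Fin n) ^ 3 + X (⟨jv - 1, by omega⟩ : Fin n) ^ 2
            - X (⟨jv, hjlt⟩ : Fin n)) = 0 :=
        Ideal.Quotient.eq_zero_iff_mem.mpr (Iid_le_Qp hn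
          (relmid_mem hn (jv - 1) jv (by omega) (by omega) (by omega) (by omega) hjlt))
      have hXj : Ideal.Quotient.mk (Qp hn) (X (⟨jv, hjlt⟩ : Fin n))
          = Ideal.Quotient.mk (Qp hn) (X (⟨jv - 1, by omega⟩ : Fin n) ^ 2)
            + Ideal.Quotient.mk (Qp hn) (X (⟨jv - 1, by omega⟩ : Fin n) ^ 3) := by
        rw [map_sub, map_add, sub_eq_zero] at hrel
        rw [← hrel]; ring
      have hmono : (monomial α (1:ℂ)) = monomial α' 1 * X (⟨jv, hjlt⟩ : Fin n) := by
        rw [X, monomial_mul, mul_one, ← hsplit]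
      have hm2 : monomial α' (1:ℂ) * X (⟨jv - 1, by omega⟩ : Fin n) ^ 2
          = monomial (α' + Finsupp.single (⟨jv - 1, by omega⟩ : Fin n) 2) 1 := by
        rw [X_pow_eq_monomial, monomial_mul, mul_one]
      have hm3 : monomial α' (1:ℂ) * X (⟨jv - 1, by omega⟩ : Fin n) ^ 3
          = monomial (α' + Finsupp.single (⟨jv - 1, by omega⟩ : Fin n) 3) 1 := by
        rw [X_pow_eq_monomial, monomial_mul, mul_one]
      have hkey : Ideal.Quotient.mk (Qp hn) (monomial α 1)
          = Ideal.Quotient.mk (Qp hn)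
              (monomial (α' + Finsupp.single (⟨jv - 1, by omega⟩ : Fin n) 2) 1)
            + Ideal.Quotient.mk (Qp hn)
              (monomial (α' + Finsupp.single (⟨jv - 1, by omega⟩ : Fin n) 3) 1) := by
        rw [hmono, map_mul, hXj, ← hm2, ← hm3, map_mul, map_mul]
        ring
      -- measure bookkeeping
      have hpow4 : (4:ℕ) ^ jv = 4 ^ (jv - 1) * 4 := by
        conv_lhs => rw [show jv = (jv - 1) + 1 by omega]
        rw [pow_succ]
      have hpos : 1 ≤ (4:ℕ) ^ (jv - 1) := Nat.one_le_pow _ _ (by norm_num)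
      have hmeq : meas α = meas α' + 4 ^ jv := by
        rw [hsplit, meas_add, meas_single]
        simp
      have hmm2 : meas (α' + Finsupp.single (⟨jv - 1, by omega⟩ : Fin n) 2)
          = meas α' + 2 * 4 ^ (jv - 1) := by rw [meas_add, meas_single]
      have hmm3 : meas (α' + Finsupp.single (⟨jv - 1, by omega⟩ : Fin n) 3)
          = meas α' + 3 * 4 ^ (jv - 1) := by rw [meas_add, meas_single]
      rw [hkey]
      have hmlt : m ≠ 0 := by omega
      refine add_mem (IH (m-1) (by omega) _ (by omega)) (IH (m-1) (by omega) _ (by omega))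
    · push_neg at hhigh
      by_cases hx1 : 2 ≤ α (⟨1, one_lt_of_two_le hn⟩ : Fin n)
      · set α' := α - Finsupp.single (⟨1, one_lt_of_two_le hn⟩ : Fin n) 2 with hα'def
        have hle : Finsupp.single (⟨1, one_lt_of_two_le hn⟩ : Fin n) 2 ≤ α := by
          rw [Finsupp.single_le_iff]; omega
        have hsplit : α = α' + Finsupp.single (⟨1, one_lt_of_two_le hn⟩ : Fin n) 2 := by
          rw [hα'def, tsub_add_cancel_of_le hle]
        have hrel : Ideal.Quotient.mk (Qp hn)
            (X (⟨0, pos_of_two_le hn⟩ : Fin n) ^ 3 + X (⟨0, pos_of_two_le hn⟩ : Fin n) ^ 2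
              - X (⟨1, one_lt_of_two_le hn⟩ : Fin n) ^ 2) = 0 :=
          Ideal.Quotient.eq_zero_iff_mem.mpr (Iid_le_Qp hn (rel0_mem hn))
        have hXj : Ideal.Quotient.mk (Qp hn) (X (⟨1, one_lt_of_two_le hn⟩ : Fin n) ^ 2)
            = Ideal.Quotient.mk (Qp hn) (X (⟨0, pos_of_two_le hn⟩ : Fin n) ^ 2)
              + Ideal.Quotient.mk (Qp hn) (X (⟨0, pos_of_two_le hn⟩ : Fin n) ^ 3) := by
          rw [map_sub, map_add, sub_eq_zero] at hrel
          rw [← hrel]; ring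
        have hmono : (monomial α (1:ℂ)) = monomial α' 1 * X (⟨1, one_lt_of_two_le hn⟩ : Fin n) ^ 2 := by
          rw [X_pow_eq_monomial, monomial_mul, mul_one, ← hsplit]
        have hm2 : monomial α' (1:ℂ) * X (⟨0, pos_of_two_le hn⟩ : Fin n) ^ 2
            = monomial (α' + Finsupp.single (⟨0, pos_of_two_le hn⟩ : Fin n) 2) 1 := by
          rw [X_pow_eq_monomial, monomial_mul, mul_one]
        have hm3 : monomial α' (1:ℂ) * X (⟨0, pos_of_two_le hn⟩ : Fin n) ^ 3
            = monomial (α' + Finsupp.single (⟨0, pos_of_two_le hn⟩ : Fin n) 3) 1 := by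
          rw [X_pow_eq_monomial, monomial_mul, mul_one]
        have hkey : Ideal.Quotient.mk (Qp hn) (monomial α 1)
            = Ideal.Quotient.mk (Qp hn)
                (monomial (α' + Finsupp.single (⟨0, pos_of_two_le hn⟩ : Fin n) 2) 1)
              + Ideal.Quotient.mk (Qp hn)
                (monomial (α' + Finsupp.single (⟨0, pos_of_two_le hn⟩ : Fin n) 3) 1) := by
          rw [hmono, map_mul, hXj, ← hm2, ← hm3, map_mul, map_mul]
          ring
        have hmeq : meas α = meas α' + 2 * 4 := by
          rw [hsplit, meas_add, meas_single]
          norm_num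
        have hmm2 : meas (α' + Finsupp.single (⟨0, pos_of_two_le hn⟩ : Fin n) 2)
            = meas α' + 2 := by rw [meas_add, meas_single]; norm_num
        have hmm3 : meas (α' + Finsupp.single (⟨0, pos_of_two_le hn⟩ : Fin n) 3)
            = meas α' + 3 := by rw [meas_add, meas_single]; norm_num
        rw [hkey]
        refine add_mem (IH (m-1) (by omega) _ (by omega)) (IH (m-1) (by omega) _ (by omega))
      · by_cases hbig : 2 ^ (n - 1) ≤ α (⟨0, pos_of_two_le hn⟩ : Fin n)
        · -- killed by XP
          have hle : Finsupp.single (⟨0, pos_of_two_le hn⟩ : Fin n) (2 ^ (n-1)) ≤ α := by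
            rw [Finsupp.single_le_iff]; omega
          have hsplit : α = (α - Finsupp.single (⟨0, pos_of_two_le hn⟩ : Fin n) (2 ^ (n-1)))
              + Finsupp.single (⟨0, pos_of_two_le hn⟩ : Fin n) (2 ^ (n-1)) :=
            (tsub_add_cancel_of_le hle).symm
          have hmono : (monomial α (1:ℂ))
              = monomial (α - Finsupp.single (⟨0, pos_of_two_le hn⟩ : Fin n) (2 ^ (n-1))) 1 * XP hn := by
            rw [XP, X_pow_eq_monomial, monomial_mul, mul_one, ← hsplit]
          have hz : Ideal.Quotient.mk (Qp hn) (monomial α (1:ℂ)) = 0 := by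
            rw [hmono]
            exact Ideal.Quotient.eq_zero_iff_mem.mpr
              (Ideal.mul_mem_left _ _ (XP_mem_Qp hn))
          rw [hz]
          exact zero_mem _
        · -- basis monomial
          push_neg at hx1 hbig
          have hsplit : α = Finsupp.single (⟨0, pos_of_two_le hn⟩ : Fin n) (α ⟨0, pos_of_two_le hn⟩)
              + Finsupp.single (⟨1, one_lt_of_two_le hn⟩ : Fin n) (α ⟨1, one_lt_of_two_le hn⟩) := by
            ext ⟨iv, hiv⟩
            rcases Nat.lt_or_ge iv 2 with hlt | hge
            · interval_cases iv <;>
                simp [Finsupp.single_apply, Fin.ext_iff]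
            · have h0 : α ⟨iv, hiv⟩ = 0 := hhigh ⟨iv, hiv⟩ (by simpa using hge)
              rw [h0]
              rw [Finsupp.add_apply, Finsupp.single_apply, Finsupp.single_apply,
                if_neg (by simp [Fin.ext_iff]; omega), if_neg (by simp [Fin.ext_iff]; omega)]
              simp
          refine Submodule.subset_span
            ⟨(⟨α ⟨0, pos_of_two_le hn⟩, by omega⟩, ⟨α ⟨1, one_lt_of_two_le hn⟩, by omega⟩), ?_⟩
          have hxx : (X (⟨0, pos_of_two_le hn⟩ : Fin n) ^ (α ⟨0, pos_of_two_le hn⟩)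
              * X (⟨1, one_lt_of_two_le hn⟩ : Fin n) ^ (α ⟨1, one_lt_of_two_le hn⟩) : MvPolynomial (Fin n) ℂ)
              = monomial α 1 := by
            rw [X_pow_eq_monomial, X_pow_eq_monomial, monomial_mul, mul_one, ← hsplit]
          rw [fam_apply]
          exact congrArg (Ideal.Quotient.mk (Qp hn)) hxx

lemma fam_span :
    ⊤ ≤ Submodule.span ℂ (Set.range (fam hn)) := by
  intro x _
  obtain ⟨p, rfl⟩ := Ideal.Quotient.mk_surjective x
  rw [p.as_sum, map_sum]
  apply sum_mem
  intro α hα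
  have hsm : (monomial α (coeff α p)) = (coeff α p) • monomial α (1:ℂ) := by
    rw [smul_monomial, smul_eq_mul, mul_one]
  have halg : (Ideal.Quotient.mk (Qp hn)) (C (coeff α p))
      = algebraMap ℂ (MvPolynomial (Fin n) ℂ ⧸ Qp hn) (coeff α p) := rfl
  rw [hsm, smul_eq_C_mul, map_mul, halg, ← Algebra.smul_def]
  exact Submodule.smul_mem _ _ (mk_monomial_mem hn α)

noncomputable def bA : Module.Basis (Fin (2 ^ (n - 1)) × Fin 2) ℂ (MvPolynomial (Fin n) ℂ ⧸ Qp hn) :=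
  Module.Basis.mk (fam_indep hn) (fam_span hn)

lemma bA_apply (p : Fin (2 ^ (n - 1)) × Fin 2) : bA hn p = fam hn p := Module.Basis.mk_apply _ _ _

lemma finrank_A : Module.finrank ℂ (MvPolynomial (Fin n) ℂ ⧸ Qp hn) = 2 ^ n := by
  rw [Module.finrank_eq_card_basis (bA hn)]
  rw [Fintype.card_prod, Fintype.card_fin, Fintype.card_fin]
  rw [← pow_succ]
  congr 1
  omega

end Span

end Br2
namespace Br2

set_option maxHeartbeats 1000000
set_option synthInstance.maxHeartbeats 1000000

section Dual

variable {n : ℕ} (hn : 2 ≤ n)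

lemma dapply_monomial (Λ : (Fin n →₀ ℕ) →₀ ℂ) (α : Fin n →₀ ℕ) (c : ℂ) :
    dapply (0 : Fin n → ℂ) Λ (monomial α c) = Λ α * ((mfact α : ℂ) * c) := by
  rw [dapply_zero_eq]
  unfold Finsupp.sum
  rw [Finset.sum_eq_single α]
  · dsimp only
    rw [coeff_monomial, if_pos rfl]
  · intro β _ hβ
    dsimp only
    rw [coeff_monomial, if_neg (fun h => hβ h.symm), mul_zero, mul_zero]
  · intro hα
    rw [Finsupp.notMem_support_iff] at hα
    dsimp only
    rw [hα, zero_mul]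

lemma mfact_ne_zero (α : Fin n →₀ ℕ) : (mfact α : ℂ) ≠ 0 := by
  rw [Nat.cast_ne_zero, mfact]
  exact Finset.prod_ne_zero_iff.mpr fun i _ => Nat.factorial_ne_zero _

noncomputable def toDualFun (Λ : (Fin n →₀ ℕ) →₀ ℂ) (hΛ : Λ ∈ dualSpace (Qp hn) 0) :
    Module.Dual ℂ (MvPolynomial (Fin n) ℂ ⧸ Qp hn) :=
  (Submodule.liftQ ((Qp hn).restrictScalars ℂ) (dapplyP 0 Λ)
      (fun p hp => LinearMap.mem_ker.mpr (mem_dualSpace.mp hΛ p hp))) ∘ₗ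
    (Submodule.Quotient.restrictScalarsEquiv ℂ (Qp hn)).symm.toLinearMap

lemma toDualFun_mk (Λ : (Fin n →₀ ℕ) →₀ ℂ) (hΛ : Λ ∈ dualSpace (Qp hn) 0)
    (p : MvPolynomial (Fin n) ℂ) :
    toDualFun hn Λ hΛ (Ideal.Quotient.mk (Qp hn) p) = dapply (0 : Fin n → ℂ) Λ p := rfl

noncomputable def toDual : (dualSpace (Qp hn) 0) →ₗ[ℂ]
    Module.Dual ℂ (MvPolynomial (Fin n) ℂ ⧸ Qp hn) where
  toFun Λ := toDualFun hn Λ.1 Λ.2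
  map_add' a b := by
    apply LinearMap.ext
    intro x
    obtain ⟨p, rfl⟩ := Ideal.Quotient.mk_surjective x
    rw [LinearMap.add_apply, toDualFun_mk, toDualFun_mk, toDualFun_mk]
    exact (dapplyL (0 : Fin n → ℂ) p).map_add a.1 b.1
  map_smul' c a := by
    apply LinearMap.ext
    intro x
    obtain ⟨p, rfl⟩ := Ideal.Quotient.mk_surjective x
    rw [RingHom.id_apply, LinearMap.smul_apply, toDualFun_mk, toDualFun_mk]
    exact (dapplyL (0 : Fin n → ℂ) p).map_smul c a.1

lemma finrank_dualSpace_Qp :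
    Module.finrank ℂ (dualSpace (Qp hn) (0 : Fin n → ℂ)) = 2 ^ n := by
  classical
  obtain ⟨K, hK⟩ := exists_K hn
  set A := MvPolynomial (Fin n) ℂ ⧸ Qp hn with hA
  set βK : Fin n →₀ ℕ := Finsupp.equivFunOnFinite.symm (fun _ => K) with hβK
  set T : Finset (Fin n →₀ ℕ) := Finset.Iic βK with hT
  have hmemT : ∀ α : Fin n →₀ ℕ, α ∉ T → K < dsum α := by
    intro α hα
    rw [hT, Finset.mem_Iic] at hα
    have : ∃ i, ¬ α i ≤ K := by
      by_contra hcon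
      push_neg at hcon
      exact hα (Finsupp.le_def.mpr fun i => hcon i)
    obtain ⟨i, hi⟩ := this
    have := dsum_apply_le α i
    omega
  have hmkzero : ∀ (α : Fin n →₀ ℕ) (c : ℂ), α ∉ T →
      Ideal.Quotient.mk (Qp hn) (monomial α c) = 0 := by
    intro α c hα
    have h1 : (monomial α (c:ℂ)) = c • monomial α 1 := by
      rw [smul_monomial, smul_eq_mul, mul_one]
    have h2 := hK α (le_of_lt (hmemT α hα))
    rw [h1, smul_eq_C_mul, map_mul, h2, mul_zero]
  -- the inverse map
  set ΘF : Module.Dual ℂ A → ((Fin n →₀ ℕ) →₀ ℂ) := fun φ =>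
    ∑ α ∈ T, Finsupp.single α ((mfact α : ℂ)⁻¹ * φ (Ideal.Quotient.mk (Qp hn) (monomial α 1)))
    with hΘF
  have hΘapply : ∀ φ (α : Fin n →₀ ℕ), (ΘF φ) α =
      if α ∈ T then (mfact α : ℂ)⁻¹ * φ (Ideal.Quotient.mk (Qp hn) (monomial α 1)) else 0 := by
    intro φ α
    rw [hΘF]
    rw [Finset.sum_apply']
    rw [Finset.sum_congr rfl (fun β _ => Finsupp.single_apply)]
    exact Finset.sum_ite_eq' T α _
  have hdapply : ∀ φ (p : MvPolynomial (Fin n) ℂ),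
      dapply (0 : Fin n → ℂ) (ΘF φ) p = φ (Ideal.Quotient.mk (Qp hn) p) := by
    intro φ p
    induction p using MvPolynomial.induction_on' with
    | add p q hp hq =>
      rw [map_add, map_add, ← hp, ← hq]
      exact (dapplyP (0 : Fin n → ℂ) (ΘF φ)).map_add p q
    | monomial α c =>
      rw [dapply_monomial, hΘapply]
      by_cases hα : α ∈ T
      · rw [if_pos hα]
        have h1 : (monomial α (c:ℂ)) = c • monomial α 1 := by
          rw [smul_monomial, smul_eq_mul, mul_one]
        have halg : (Ideal.Quotient.mk (Qp hn)) (C c)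
            = algebraMap ℂ A c := rfl
        rw [h1, smul_eq_C_mul, map_mul, halg, ← Algebra.smul_def, map_smul]
        rw [smul_eq_mul]
        have hne := mfact_ne_zero (n := n) α
        first
        | (field_simp
           ring)
        | field_simp
        | ring
      · rw [if_neg hα, hmkzero α c hα, map_zero, zero_mul]
  have hΘmem : ∀ φ, ΘF φ ∈ dualSpace (Qp hn) (0 : Fin n → ℂ) := by
    intro φ
    rw [mem_dualSpace]
    intro p hp
    rw [hdapply, Ideal.Quotient.eq_zero_iff_mem.mpr hp, map_zero]
  set Θ : Module.Dual ℂ A →ₗ[ℂ] (dualSpace (Qp hn) (0 : Fin n → ℂ)) :=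
    { toFun := fun φ => ⟨ΘF φ, hΘmem φ⟩
      map_add' := by
        intro φ ψ
        apply Subtype.ext
        show ΘF (φ + ψ) = ΘF φ + ΘF ψ
        rw [hΘF]
        simp only [LinearMap.add_apply, mul_add, Finsupp.single_add]
        rw [Finset.sum_add_distrib]
      map_smul' := by
        intro c φ
        apply Subtype.ext
        show ΘF (c • φ) = c • ΘF φ
        rw [hΘF]
        simp only [LinearMap.smul_apply, smul_eq_mul]
        rw [Finset.smul_sum]
        refine Finset.sum_congr rfl fun β _ => ?_
        rw [Finsupp.smul_single]
        congr 1
        rw [smul_eq_mul]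
        ring } with hΘ
  have h1 : (toDual hn).comp Θ = LinearMap.id := by
    apply LinearMap.ext
    intro φ
    apply LinearMap.ext
    intro x
    obtain ⟨p, rfl⟩ := Ideal.Quotient.mk_surjective x
    show toDualFun hn (ΘF φ) (hΘmem φ) (Ideal.Quotient.mk (Qp hn) p) = φ _
    rw [toDualFun_mk, hdapply]
  have h2 : Θ.comp (toDual hn) = LinearMap.id := by
    apply LinearMap.ext
    intro Λ
    apply Subtype.ext
    apply Finsupp.ext
    intro α
    show (ΘF (toDualFun hn Λ.1 Λ.2)) α = Λ.1 α
    rw [hΘapply]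
    by_cases hα : α ∈ T
    · rw [if_pos hα, toDualFun_mk, dapply_monomial, mul_one]
      rw [mul_comm (Λ.1 α), ← mul_assoc, inv_mul_cancel₀ (mfact_ne_zero α), one_mul]
    · rw [if_neg hα]
      have hz : (monomial α (1:ℂ)) ∈ Qp hn :=
        Ideal.Quotient.eq_zero_iff_mem.mp (hK α (le_of_lt (hmemT α hα)))
      have := mem_dualSpace.mp Λ.2 _ hz
      rw [dapply_monomial, mul_one] at this
      rcases mul_eq_zero.mp this with h | h
      · exact h.symm
      · exact absurd h (mfact_ne_zero α)
  have equiv : (dualSpace (Qp hn) (0 : Fin n → ℂ)) ≃ₗ[ℂ] Module.Dual ℂ A :=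
    LinearEquiv.ofLinear (toDual hn) Θ h1 h2
  rw [LinearEquiv.finrank_eq equiv]
  haveI : Module.Finite ℂ A := Module.Finite.of_basis (bA hn)
  rw [Module.finrank_eq_card_basis (bA hn).dualBasis]
  rw [Fintype.card_prod, Fintype.card_fin, Fintype.card_fin, ← pow_succ]
  congr 1
  omega

lemma dualSpace_Iid_eq : dualSpace (Iid hn) (0 : Fin n → ℂ) = dualSpace (Qp hn) 0 := by
  apply le_antisymm
  · intro Λ hΛ
    rw [mem_dualSpace] at hΛ ⊢
    intro p hp
    rw [Qp] at hp
    obtain ⟨q, hq, r, hr, rfl⟩ := Submodule.mem_sup.mp hp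
    obtain ⟨w, rfl⟩ := Ideal.mem_span_singleton'.mp hr
    have hadd : dapply (0 : Fin n → ℂ) Λ (q + w * XP hn)
        = dapply (0:Fin n → ℂ) Λ q + dapply (0:Fin n → ℂ) Λ (w * XP hn) :=
      (dapplyP (0 : Fin n → ℂ) Λ).map_add q _
    rw [hadd, hΛ q hq, zero_add]
    obtain ⟨u, hu1, hu2⟩ := exists_u hn
    set d := ordD Λ with hd
    set mp := 1 - u with hmp
    have hccm : constantCoeff mp = 0 := by
      rw [hmp, map_sub, map_one, hu1, sub_self]
    set σ := ∑ i ∈ Finset.range (d+1), mp ^ i with hσ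
    have hgeo : σ * (mp - 1) = mp ^ (d+1) - 1 := by
      rw [hσ]; exact geom_sum_mul mp (d+1)
    have h1mp : (1 : MvPolynomial (Fin n) ℂ) - mp^(d+1) = σ * u := by
      have hu' : mp - 1 = -u := by rw [hmp]; ring
      rw [hu'] at hgeo
      linear_combination hgeo
    have hid : w * XP hn = (σ * w) * (u * XP hn) + mp^(d+1) * (w * XP hn) := by
      linear_combination (w * XP hn) * h1mp
    have hsplit : dapply (0:Fin n → ℂ) Λ (w * XP hn)
        = dapply (0:Fin n → ℂ) Λ ((σ * w) * (u * XP hn))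
          + dapply (0:Fin n → ℂ) Λ (mp^(d+1) * (w * XP hn)) := by
      conv_lhs => rw [hid]
      exact (dapplyP (0 : Fin n → ℂ) Λ).map_add _ _
    rw [hsplit, hΛ _ (Ideal.mul_mem_left _ _ hu2), zero_add]
    apply dapply_eq_zero_of_lowCoeff
    exact lowCoeff_mul (a := d + 1) (b := 0)
      (lowCoeff_pow (lowCoeff_one hccm) (d+1)) (lowCoeff_zero _)
  · intro Λ hΛ
    rw [mem_dualSpace] at hΛ ⊢
    exact fun p hp => hΛ p (Iid_le_Qp hn hp)

lemma mult_eq : mult (Iid hn) (0 : Fin n → ℂ) = 2 ^ n := by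
  rw [mult, dualSpace_Iid_eq hn, finrank_dualSpace_Qp hn]

end Dual

end Br2
namespace Br2

set_option maxHeartbeats 1000000
set_option synthInstance.maxHeartbeats 1000000

section Finish

variable {n : ℕ} (hn : 2 ≤ n)

/-- Part 1: the origin is a root. -/
lemma eval0_bgen (m : Fin n) : eval (0 : Fin n → ℂ) (bgen hn m) = 0 := by
  by_cases h0 : (m : ℕ) = 0
  · rw [bgen_at_zero hn h0]
    simp
  · by_cases hl : (m : ℕ) = n - 1
    · rw [bgen_at_last hn hl]; simp
    · rw [bgen_at_mid hn h0 hl]; simp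

/-- Part 2: the origin is an isolated root. -/
lemma isolated : ∃ U ∈ nhds (0 : Fin n → ℂ),
    ∀ x ∈ U, (∀ m, eval x (bgen hn m) = 0) → x = 0 := by
  refine ⟨Metric.ball (0 : Fin n → ℂ) 1, Metric.ball_mem_nhds _ one_pos, ?_⟩
  intro x hx hroot
  have hsmall : ∀ i : Fin n, ‖x i‖ < 1 := by
    intro i
    have h1 : dist x 0 < 1 := Metric.mem_ball.mp hx
    have h2 := (dist_pi_lt_iff one_pos).mp h1 i
    simpa using h2
  have hne : ∀ i : Fin n, x i + 1 ≠ 0 := by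
    intro i h
    have hxi : x i = -1 := by linear_combination h
    have hs := hsmall i
    rw [hxi] at hs
    norm_num at hs
  have claim : ∀ d : ℕ, d ≤ n - 1 → x ⟨n - 1 - d, by omega⟩ = 0 := by
    intro d
    induction d using Nat.strong_induction_on with
    | _ d IH =>
      intro hd
      by_cases hd0 : d = 0
      · subst hd0
        have h := hroot ⟨n - 1 - 0, by omega⟩
        rw [bgen_at_last hn (by simp)] at h
        rw [map_pow, eval_X] at h
        exact pow_eq_zero_iff (by norm_num) |>.mp h
      · by_cases hk0 : n - 1 - d = 0
        · -- use the first equation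
          have h := hroot ⟨0, pos_of_two_le hn⟩
          rw [bgen_at_zero hn rfl] at h
          simp only [map_sub, map_add, map_pow, eval_X] at h
          have h1 : x ⟨1, one_lt_of_two_le hn⟩ = 0 := by
            have h2 := IH (n - 2) (by omega) (by omega)
            rwa [show (⟨n - 1 - (n - 2), by omega⟩ : Fin n) = ⟨1, one_lt_of_two_le hn⟩
              from Fin.ext (show n - 1 - (n - 2) = 1 by omega)] at h2
          rw [h1] at h
          have hfac : x ⟨0, pos_of_two_le hn⟩ ^ 2 * (x ⟨0, pos_of_two_le hn⟩ + 1) = 0 := by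
            linear_combination h
          rw [show (⟨n - 1 - d, by omega⟩ : Fin n) = ⟨0, pos_of_two_le hn⟩
            from Fin.ext (show n - 1 - d = 0 by omega)]
          rcases mul_eq_zero.mp hfac with h2 | h2
          · exact pow_eq_zero_iff (by norm_num) |>.mp h2
          · exact absurd h2 (hne _)
        · -- middle equation at k = n-1-d
          have hk1 : 1 ≤ n - 1 - d := by omega
          have hkn : n - 1 - d < n - 1 := by omega
          have h := hroot ⟨n - 1 - d, by omega⟩
          rw [bgen_at_mid hn (by simpa using hk0) (by simp; omega)] at h
          simp only [map_sub, map_add, map_pow, eval_X] at h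
          have h1 : x ⟨n - 1 - d + 1, by omega⟩ = 0 := by
            have h2 := IH (d - 1) (by omega) (by omega)
            rwa [show (⟨n - 1 - (d - 1), by omega⟩ : Fin n)
              = ⟨n - 1 - d + 1, by omega⟩
              from Fin.ext (show n - 1 - (d - 1) = n - 1 - d + 1 by omega)] at h2
          rw [h1] at h
          have hfac : x ⟨n - 1 - d, by omega⟩ ^ 2 * (x ⟨n - 1 - d, by omega⟩ + 1) = 0 := by
            linear_combination h
          rcases mul_eq_zero.mp hfac with h2 | h2
          · exact pow_eq_zero_iff (by norm_num) |>.mp h2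
          · exact absurd h2 (hne _)
  funext i
  obtain ⟨iv, hiv⟩ := i
  have h := claim (n - 1 - iv) (by omega)
  rw [show (⟨n - 1 - (n - 1 - iv), by omega⟩ : Fin n) = ⟨iv, hiv⟩
    from Fin.ext (show n - 1 - (n - 1 - iv) = iv by omega)] at h
  exact h

/-- Part 4: the primal basis. -/
lemma primal_basis :
    ∃ b : Module.Basis (Fin (2 ^ (n - 1)) × Fin 2) ℂ
      (MvPolynomial (Fin n) ℂ ⧸
        Ideal.span {p | ∃ s, eval (fun _ => (0:ℂ)) s ≠ 0 ∧ s * p ∈ Iid hn}),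
      ∀ p, b p = Ideal.Quotient.mk _
        (X (⟨0, pos_of_two_le hn⟩ : Fin n) ^ (p.1 : ℕ) * X (⟨1, one_lt_of_two_le hn⟩ : Fin n) ^ (p.2 : ℕ)) := by
  set Q := Ideal.span {p | ∃ s, eval (fun _ => (0:ℂ)) s ≠ 0 ∧ s * p ∈ Iid hn} with hQ
  have heq : Qp hn = Q := Qp_eq hn
  let e := (Ideal.quotientEquivAlgOfEq ℂ heq).toLinearEquiv
  refine ⟨(bA hn).map e, ?_⟩
  intro p
  rw [Module.Basis.map_apply, bA_apply, fam_apply]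
  exact Ideal.quotientEquivAlgOfEq_mk ℂ heq _

/-- Jacobian entries -/
lemma jac_entry (k j : Fin n) :
    eval (0 : Fin n → ℂ) (pderiv j (bgen hn k))
      = if (k:ℕ) ≠ 0 ∧ (k:ℕ) ≠ n-1 ∧ (j:ℕ) = (k:ℕ)+1 then -1 else 0 := by
  have hpow : ∀ (i : Fin n) (m : ℕ), 2 ≤ m →
      eval (0 : Fin n → ℂ) (pderiv j (X i ^ m)) = 0 := by
    intro i m hm
    rw [X_pow_eq_monomial, pderiv_monomial, eval0_monomial]
    rw [if_neg]
    intro hzero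
    have happ := congrArg (fun f => f i) hzero
    simp only [Finsupp.coe_tsub, Pi.sub_apply, Finsupp.single_eq_same,
      Finsupp.coe_zero, Pi.zero_apply] at happ
    have hle : Finsupp.single j 1 i ≤ 1 := by
      rw [Finsupp.single_apply]
      split <;> omega
    omega
  by_cases h0 : (k:ℕ) = 0
  · rw [bgen_at_zero hn h0, map_sub, map_add, map_sub, map_add]
    rw [hpow _ 3 (by norm_num), hpow _ 2 (by norm_num), hpow _ 2 (by norm_num)]
    rw [if_neg (by tauto)]
    ring
  · by_cases hl : (k:ℕ) = n-1
    · rw [bgen_at_last hn hl, hpow _ 2 (by norm_num), if_neg (by tauto)]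
    · rw [bgen_at_mid hn h0 hl, map_sub, map_add, map_sub, map_add]
      rw [hpow _ 3 (by norm_num), hpow _ 2 (by norm_num)]
      by_cases hj : (j:ℕ) = (k:ℕ)+1
      · rw [if_pos ⟨h0, hl, hj⟩]
        have hjeq : (⟨(k:ℕ)+1, by have := k.isLt; omega⟩ : Fin n) = j :=
          Fin.ext (show (k:ℕ) + 1 = (j:ℕ) by omega)
        rw [hjeq, pderiv_X_self, map_one]
        ring
      · rw [if_neg (by tauto)]
        have hne : (⟨(k:ℕ)+1, by have := k.isLt; omega⟩ : Fin n) ≠ j := by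
          intro h
          exact hj (by rw [← h])
        rw [pderiv_X_of_ne hne, map_zero]
        ring

/-- Part 5: the Jacobian kernel has dimension 2. -/
lemma jac_finrank :
    Module.finrank ℂ
      (LinearMap.ker (Matrix.mulVecLin
        (Matrix.of fun (k j : Fin n) => eval (0 : Fin n → ℂ) (pderiv j (bgen hn k))))) = 2 := by
  classical
  set M : Matrix (Fin n) (Fin n) ℂ :=
    Matrix.of fun (k j : Fin n) => eval (0 : Fin n → ℂ) (pderiv j (bgen hn k)) with hM
  have hcomp : ∀ (v : Fin n → ℂ) (k : Fin n), (M.mulVecLin v) k =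
      if h : (k:ℕ) ≠ 0 ∧ (k:ℕ) ≠ n-1
      then -(v ⟨(k:ℕ)+1, by have := k.isLt; omega⟩) else 0 := by
    intro v k
    rw [Matrix.mulVecLin_apply]
    have hsum : M.mulVec v k = ∑ j, M k j * v j := rfl
    rw [hsum]
    split_ifs with h
    · rw [Finset.sum_eq_single (⟨(k:ℕ)+1, by have := k.isLt; omega⟩ : Fin n)]
      · rw [hM, Matrix.of_apply, jac_entry hn, if_pos ⟨h.1, h.2, rfl⟩]
        ring
      · intro j _ hj
        rw [hM, Matrix.of_apply, jac_entry hn, if_neg, zero_mul]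
        rintro ⟨-, -, hj'⟩
        exact hj (Fin.ext hj')
      · intro hmem
        exact absurd (Finset.mem_univ _) hmem
    · apply Finset.sum_eq_zero
      intro j _
      rw [hM, Matrix.of_apply, jac_entry hn, if_neg (by tauto), zero_mul]
  have hker : ∀ v : Fin n → ℂ, v ∈ LinearMap.ker M.mulVecLin ↔
      (∀ j : Fin n, 2 ≤ (j:ℕ) → v j = 0) := by
    intro v
    rw [LinearMap.mem_ker]
    constructor
    · intro hv j hj
      have hjlt := j.isLt
      have hcol := congrFun hv ⟨(j:ℕ) - 1, by omega⟩
      rw [hcomp] at hcol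
      have hj1 : (j:ℕ) - 1 ≠ 0 := by omega
      have hj2 : (j:ℕ) - 1 ≠ n - 1 := by omega
      rw [dif_pos (show _ ∧ _ from ⟨hj1, hj2⟩)] at hcol
      simp only [Pi.zero_apply, neg_eq_zero] at hcol
      rwa [show (⟨(j:ℕ) - 1 + 1, by omega⟩ : Fin n) = j
        from Fin.ext (show (j:ℕ) - 1 + 1 = (j:ℕ) by omega)] at hcol
    · intro hv
      funext k
      rw [hcomp]
      split_ifs with h
      · rw [hv _ (show 2 ≤ (k:ℕ) + 1 by omega), neg_zero]
        rfl
      · rfl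
  let E : (LinearMap.ker (Matrix.mulVecLin M)) ≃ₗ[ℂ] (Fin 2 → ℂ) :=
    { toFun := fun v i => v.1 (Fin.castLE hn i)
      map_add' := fun a b => rfl
      map_smul' := fun c a => rfl
      invFun := fun c => ⟨fun j => if h : (j:ℕ) < 2 then c ⟨(j:ℕ), h⟩ else 0, by
        rw [hker]
        intro j hj
        rw [dif_neg (by omega)]⟩
      left_inv := by
        intro v
        apply Subtype.ext
        funext j
        show (if h : (j:ℕ) < 2 then v.1 (Fin.castLE hn ⟨(j:ℕ), h⟩) else 0) = v.1 j
        split_ifs with h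
        · exact congrArg v.1 (Fin.ext rfl)
        · exact ((hker v.1).mp v.2 j (by omega)).symm
      right_inv := by
        intro c
        funext i
        show (if h : ((Fin.castLE hn i : Fin n):ℕ) < 2 then c ⟨_, h⟩ else 0) = c i
        rw [dif_pos (by exact i.isLt)]
        exact congrArg c (Fin.ext rfl) }
  rw [LinearEquiv.finrank_eq E]
  exact Module.finrank_fin_fun ℂ

end Finish

end Br2
/-- for every `n ≥ 2`, the system
`x₁³+x₁²−x₂², x₂³+x₂²−x₃, …, x_{n−1}³+x_{n−1}²−xₙ, xₙ²` has the origin as an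
isolated root of multiplicity `2ⁿ`, with primal basis
`{x₁^a x₂^b : a < 2^{n−1}, b < 2}` for the local quotient ring, and the corank
of the Jacobian at the origin equals 2 (breadth two). -/
theorem breadth_two_family (n : ℕ) (hn : 2 ≤ n) :
    let fs : Fin n → MvPolynomial (Fin n) ℂ := fun i =>
      if h0 : (i : ℕ) = 0 then
        X (⟨0, by omega⟩ : Fin n) ^ 3 + X (⟨0, by omega⟩ : Fin n) ^ 2
          - X (⟨1, by omega⟩ : Fin n) ^ 2
      else if hl : (i : ℕ) = n - 1 then X i ^ 2
      else X i ^ 3 + X i ^ 2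
        - X (⟨(i : ℕ) + 1, by have := i.isLt; omega⟩ : Fin n)
    let ξ : Fin n → ℂ := fun _ => 0
    let I : Ideal (MvPolynomial (Fin n) ℂ) := Ideal.span (Set.range fs)
    -- the primary component of I at the origin (by saturation)
    let Q : Ideal (MvPolynomial (Fin n) ℂ) :=
      Ideal.span {p | ∃ s, eval ξ s ≠ 0 ∧ s * p ∈ I}
    -- the origin is a root,
    (∀ m, eval ξ (fs m) = 0) ∧
    -- it is isolated,
    (∃ U ∈ nhds ξ, ∀ x ∈ U, (∀ m, eval x (fs m) = 0) → x = ξ) ∧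
    -- it has multiplicity 2ⁿ,
    mult I ξ = 2 ^ n ∧
    -- the monomials x₁^a x₂^b (a < 2^{n−1}, b < 2) are a primal basis,
    (∃ b : Module.Basis (Fin (2 ^ (n - 1)) × Fin 2) ℂ (MvPolynomial (Fin n) ℂ ⧸ Q),
      ∀ p, b p = Ideal.Quotient.mk Q
        (X (⟨0, by omega⟩ : Fin n) ^ (p.1 : ℕ) *
          X (⟨1, by omega⟩ : Fin n) ^ (p.2 : ℕ))) ∧
    -- and the corank of the Jacobian at the origin is 2
    Module.finrank ℂ
      (LinearMap.ker (Matrix.mulVecLin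
        (Matrix.of fun (k j : Fin n) => eval ξ (pderiv j (fs k))))) = 2 := by
  intro fs ξ I Q
  refine ⟨fun m => ?_, ?_, ?_, ?_, ?_⟩
  · exact Br2.eval0_bgen hn m
  · exact Br2.isolated hn
  · exact Br2.mult_eq hn
  · exact Br2.primal_basis hn
  · exact Br2.jac_finrank hn

end
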